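/- Let X and Y be bounded linear operators on a complex Hilbert space H, let m > 0 be a real number, and suppose X − mI is a positive operator (i.e., X ≥ mI > 0). Then m‖Y‖ ≤ (1/2)‖YX + XY‖. -/

import Mathlib

section
variable {A : Type*} [CStarAlgebra A] [PartialOrder A] [StarOrderedRing A]

lemma aux_norm_le {a : A} {r : ℝ} (hr : 0 ≤ r) (ha : IsSelfAdjoint a)
    (h1 : a ≤ algebraMap ℝ A r) (h2 : algebraMap ℝ A (-r) ≤ a) : ‖a‖ ≤ r := by
  obtain hA | hA := subsingleton_or_nontrivial A
  · simp [Subsingleton.elim a 0, hr]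
  · rcases CStarAlgebra.norm_or_neg_norm_mem_spectrum ha with h | h
    · exact (le_algebraMap_iff_spectrum_le ha).mp h1 _ h
    · linarith [(algebraMap_le_iff_le_spectrum ha).mp h2 _ h]

end

lemma aux_smul_pos {H : Type*} [NormedAddCommGroup H] [InnerProductSpace ℂ H] [CompleteSpace H]
    {T : H →L[ℂ] H} {r : ℝ} (hr : 0 ≤ r) (hT : T.IsPositive) :
    (((r : ℂ)) • T).IsPositive := by
  rw [ContinuousLinearMap.isPositive_def']
  constructor
  · rw [IsSelfAdjoint, star_smul, hT.isSelfAdjoint.star_eq]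
    simp [Complex.conj_ofReal]
  · intro x
    have := hT.2 x
    simp only [ContinuousLinearMap.reApplyInnerSelf, ContinuousLinearMap.smul_apply,
      inner_smul_left, Complex.conj_ofReal] at *
    rw [show ((r:ℂ) * inner ℂ (T x) x) = r • (inner ℂ (T x) x : ℂ) by simp [Complex.coe_smul], RCLike.smul_re]
    positivity

theorem stmt_9 {H : Type*} [NormedAddCommGroup H] [InnerProductSpace ℂ H] [CompleteSpace H]
    (X Y : H →L[ℂ] H) (m : ℝ) (hm : 0 < m)
    (hX : (X - (m : ℂ) • (1 : H →L[ℂ] H)).IsPositive) :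
    m * ‖Y‖ ≤ (1 / 2 : ℝ) * ‖Y * X + X * Y‖ := by
  obtain hH | hH := subsingleton_or_nontrivial H
  · have hY : Y = 0 := Subsingleton.elim _ _
    rw [hY]
    simp
  have hNA : Nontrivial (H →L[ℂ] H) := by
    obtain ⟨x, hx⟩ := exists_ne (0 : H)
    exact ⟨1, 0, fun h => hx (by simpa using DFunLike.congr_fun h x)⟩
  have hXsa : IsSelfAdjoint X := by
    have h1 : IsSelfAdjoint ((m:ℂ) • (1 : H →L[ℂ] H)) := by
      rw [IsSelfAdjoint, star_smul, star_one]
      simp [Complex.conj_ofReal]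
    simpa using hX.isSelfAdjoint.add h1
  have halg : ∀ r : ℝ, algebraMap ℝ (H →L[ℂ] H) r = (r : ℂ) • 1 := fun r => by
    rw [Algebra.algebraMap_eq_smul_one]
    norm_num [Complex.coe_smul]
  have hmX : algebraMap ℝ (H →L[ℂ] H) m ≤ X := by
    rw [halg]
    exact (ContinuousLinearMap.le_def _ _).mpr hX
  have hXc : X ≤ algebraMap ℝ (H →L[ℂ] H) ‖X‖ := hXsa.le_algebraMap_norm_self
  have hmc : m ≤ ‖X‖ := by
    obtain ⟨t, ht⟩ := CFC.spectrum_nonempty (R := ℝ) X hXsa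
    have h1 := (le_algebraMap_iff_spectrum_le hXsa).mp hXc t ht
    have h2 := (algebraMap_le_iff_le_spectrum hXsa).mp hmX t ht
    linarith
  set c : ℝ := ‖X‖ with hcdef
  have hc : 0 < c := lt_of_lt_of_le hm hmc
  set r : ℝ := 1 - m / c with hrdef
  have hr : 0 ≤ r := by
    rw [hrdef]
    have : m / c ≤ 1 := (div_le_one hc).mpr hmc
    linarith
  set Z : H →L[ℂ] H := 1 - ((c⁻¹ : ℝ) : ℂ) • X with hZ
  have hZsa : IsSelfAdjoint Z := by
    rw [hZ, IsSelfAdjoint, star_sub, star_smul, star_one, hXsa.star_eq]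
    simp [Complex.conj_ofReal]
  have hZ1 : Z ≤ algebraMap ℝ _ r := by
    rw [halg, ContinuousLinearMap.le_def]
    have h := aux_smul_pos (inv_pos.mpr hc).le hX
    convert h using 1
    rw [hZ]
    rw [smul_sub, smul_smul]
    rw [show ((c⁻¹:ℝ):ℂ) * (m:ℂ) = ((m/c : ℝ):ℂ) by push_cast; field_simp]
    rw [hrdef]
    push_cast
    module
  have hZ2 : algebraMap ℝ _ (-r) ≤ Z := by
    rw [halg, ContinuousLinearMap.le_def]
    have h1 : ((((c:ℝ)⁻¹:ℝ):ℂ) • (((c:ℝ):ℂ) • (1 : H →L[ℂ] H) - X)).IsPositive := by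
      apply aux_smul_pos (inv_pos.mpr hc).le
      have := (ContinuousLinearMap.le_def _ _).mp hXc
      rwa [halg] at this
    have h2 : (((r:ℝ):ℂ) • (1 : H →L[ℂ] H)).IsPositive :=
      aux_smul_pos hr (ContinuousLinearMap.isPositive_one)
    have h3 := h1.add h2
    convert h3 using 1
    rw [hZ, smul_sub, smul_smul]
    rw [show ((c⁻¹:ℝ):ℂ) * ((c:ℝ):ℂ) = 1 by push_cast; exact inv_mul_cancel₀ (by exact_mod_cast hc.ne')]
    module
  have hZn : ‖Z‖ ≤ r := aux_norm_le hr hZsa hZ1 hZ2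
  set S : H →L[ℂ] H := Y * X + X * Y with hS
  have key : Y = (((2*c)⁻¹ : ℝ) : ℂ) • S + (((2⁻¹ : ℝ)) : ℂ) • (Z * Y + Y * Z) := by
    rw [hS, hZ]
    simp only [sub_mul, mul_sub, one_mul, mul_one, smul_mul_assoc, mul_smul_comm,
      smul_add, smul_sub, smul_smul]
    push_cast
    rw [show ((2*c)⁻¹ : ℂ) = (2⁻¹ : ℂ) * (c⁻¹:ℂ) by rw [mul_inv]]
    module
  have hnorm : ‖Y‖ ≤ (2*c)⁻¹ * ‖S‖ + 2⁻¹ * (r * ‖Y‖ + ‖Y‖ * r) := by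
    calc ‖Y‖ = ‖(((2*c)⁻¹ : ℝ) : ℂ) • S + (((2⁻¹ : ℝ)) : ℂ) • (Z * Y + Y * Z)‖ := by rw [← key]
    _ ≤ ‖(((2*c)⁻¹ : ℝ) : ℂ) • S‖ + ‖(((2⁻¹ : ℝ)) : ℂ) • (Z * Y + Y * Z)‖ := norm_add_le _ _
    _ ≤ (2*c)⁻¹ * ‖S‖ + 2⁻¹ * (r * ‖Y‖ + ‖Y‖ * r) := by
        rw [norm_smul, norm_smul]
        gcongr
        · rw [show ‖(((2*c)⁻¹:ℝ):ℂ)‖ = (2*c)⁻¹ by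
            rw [Complex.norm_real, Real.norm_eq_abs, abs_of_nonneg (by positivity)]]
        · simp
        · calc ‖Z * Y + Y * Z‖ ≤ ‖Z * Y‖ + ‖Y * Z‖ := norm_add_le _ _
            _ ≤ ‖Z‖ * ‖Y‖ + ‖Y‖ * ‖Z‖ := by gcongr <;> exact norm_mul_le _ _
            _ ≤ r * ‖Y‖ + ‖Y‖ * r := by gcongr
  have hYn : 0 ≤ ‖Y‖ := norm_nonneg _
  have hSn : 0 ≤ ‖S‖ := norm_nonneg _
  rw [hrdef] at hnorm
  have h4 : (m / c) * ‖Y‖ ≤ (2*c)⁻¹ * ‖S‖ := by nlinarith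
  have h5 : m * ‖Y‖ ≤ c * ((2*c)⁻¹ * ‖S‖) := by
    rw [show c * ((2*c)⁻¹ * ‖S‖) = c * (m/c * ‖Y‖) + c * ((2*c)⁻¹*‖S‖ - m/c*‖Y‖) by ring]
    have : c * (m/c * ‖Y‖) = m * ‖Y‖ := by field_simp
    nlinarith
  calc m * ‖Y‖ ≤ c * ((2*c)⁻¹ * ‖S‖) := h5
    _ = (1/2 : ℝ) * ‖S‖ := by field_simp
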